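/- Let d ≥ 1, let K be a nonempty closed convex subset of ℝ^d with closedBall(0,1) ⊆ K ⊆ closedBall(0,R) for some R > 1, let η = 1/d², and let M > 0. Let π^Y be the probability measure on ℝ^d with Lebesgue density g(y) = (∫_K exp(−‖x−y‖²/(2η)) dx) / (vol(K)·(2πη)^{d/2}), and let μ be a measure on ℝ^d satisfying μ(A) ≤ M·π^Y(A) for every measurable set A. Define n(y) = (2πη)^{d/2}·exp(−infDist(y,K)²/(2η)) / ∫_K exp(−‖x−y‖²/(2η)) dx. Then ∫_{ℝ^d} n(y) dμ(y) ≤ M·(√(2πe) + 1). -/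

import Mathlib

open MeasureTheory Metric Set Real Pointwise

lemma gauss_int {η : ℝ} (hη : 0 < η) (c : ℝ) :
    Integrable (fun t : ℝ => ((t - c)/η) * Real.exp (-(t - c)^2/(2*η))) := by
  have hb : 0 < 1/(2*η) := by positivity
  have h0 : Integrable (fun t : ℝ => (1/η) * (t * Real.exp (-(1/(2*η)) * t^2))) :=
    (integrable_mul_exp_neg_mul_sq hb).const_mul _
  have := h0.comp_sub_right c
  refine this.congr (Filter.Eventually.of_forall fun t => ?_)
  ring_nf

lemma gauss_ftc {η : ℝ} (hη : 0 < η) (c a : ℝ) :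
    ∫ t in Set.Ioi a, ((t - c)/η) * Real.exp (-(t - c)^2/(2*η))
      = Real.exp (-(a - c)^2/(2*η)) := by
  have hderiv : ∀ t ∈ Set.Ioi a, HasDerivAt
      (fun t : ℝ => -Real.exp (-(t - c)^2/(2*η)))
      (((t - c)/η) * Real.exp (-(t - c)^2/(2*η))) t := by
    intro t _
    have h1 : HasDerivAt (fun t : ℝ => -(t - c)^2/(2*η)) (-(t - c)/η) t := by
      have : HasDerivAt (fun t : ℝ => (t - c)) 1 t := (hasDerivAt_id t).sub_const c
      have h2 := ((this.pow 2).neg).div_const (2*η)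
      refine h2.congr_deriv ?_
      norm_num
      field_simp
      ring
    have h3 := (h1.exp).neg
    refine h3.congr_deriv ?_
    ring
  have htend : Filter.Tendsto (fun t : ℝ => -Real.exp (-(t - c)^2/(2*η)))
      Filter.atTop (nhds 0) := by
    rw [show (0:ℝ) = -0 by ring]
    apply Filter.Tendsto.neg
    apply Real.tendsto_exp_atBot.comp
    have h1 : Filter.Tendsto (fun t : ℝ => t - c) Filter.atTop Filter.atTop :=
      Filter.tendsto_atTop_add_const_right _ (-c) Filter.tendsto_id
    have h2 : Filter.Tendsto (fun t : ℝ => (t - c)^2) Filter.atTop Filter.atTop :=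
      (Filter.tendsto_pow_atTop (two_ne_zero)).comp h1
    have h3 := h2.atTop_div_const (by positivity : (0:ℝ) < 2*η)
    have h4 := Filter.tendsto_neg_atTop_atBot.comp h3
    refine h4.congr fun t => ?_
    simp [neg_div, Function.comp]
  have := integral_Ioi_of_hasDerivAt_of_tendsto
    (Continuous.continuousWithinAt (by continuity)) hderiv (gauss_int hη c).integrableOn htend
  rw [this]; ring

lemma gauss_int' {η : ℝ} (hη : 0 < η) (c : ℝ) :
    Integrable (fun t : ℝ => Real.exp (-(t - c)^2/(2*η))) := by
  have hb : 0 < 1/(2*η) := by positivity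
  have h0 : Integrable (fun t : ℝ => Real.exp (-(1/(2*η)) * t^2)) :=
    integrable_exp_neg_mul_sq hb
  have := h0.comp_sub_right c
  refine this.congr (Filter.Eventually.of_forall fun t => ?_)
  ring_nf

lemma gauss_total {η : ℝ} (hη : 0 < η) (c : ℝ) :
    ∫ t : ℝ, Real.exp (-(t - c)^2/(2*η)) = Real.sqrt (2*Real.pi*η) := by
  have h1 : ∫ t : ℝ, Real.exp (-(t - c)^2/(2*η))
      = ∫ t : ℝ, Real.exp (-(1/(2*η)) * t^2) := by
    rw [← integral_sub_right_eq_self (fun t : ℝ => Real.exp (-(1/(2*η)) * t^2)) c]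
    congr 1 with t
    ring_nf
  rw [h1, integral_gaussian]
  rw [show Real.pi / (1/(2*η)) = 2*Real.pi*η by field_simp]

lemma key_identity (d : ℕ) (η : ℝ) (t : ℝ) (hd : 1 ≤ d) (hη : η = 1/(d:ℝ)^2) :
    (t/η) * Real.exp (-t^2/(2*η)) * Real.exp (d*t)
    = Real.exp (1/2) * (((t - 1/d)/η) * Real.exp (-(t - 1/d)^2/(2*η))
        + ((1/d)/η) * Real.exp (-(t - 1/d)^2/(2*η))) := by
  have hd0 : (0:ℝ) < d := by exact_mod_cast hd
  have hη0 : 0 < η := by rw [hη]; positivity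
  have hexp : Real.exp (-t^2/(2*η)) * Real.exp (d*t)
      = Real.exp (1/2) * Real.exp (-(t - 1/d)^2/(2*η)) := by
    rw [← Real.exp_add, ← Real.exp_add]
    congr 1
    rw [hη]
    field_simp
    ring
  calc (t/η) * Real.exp (-t^2/(2*η)) * Real.exp (d*t)
      = (t/η) * (Real.exp (-t^2/(2*η)) * Real.exp (d*t)) := by ring
    _ = (t/η) * (Real.exp (1/2) * Real.exp (-(t - 1/d)^2/(2*η))) := by rw [hexp]
    _ = _ := by field_simp; ring

lemma oneD_integrable (d : ℕ) (η : ℝ) (hd : 1 ≤ d) (hη : η = 1/(d:ℝ)^2) :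
    Integrable (fun t : ℝ => (t/η) * Real.exp (-t^2/(2*η)) * Real.exp (d*t)) := by
  have hd0 : (0:ℝ) < d := by exact_mod_cast hd
  have hη0 : 0 < η := by rw [hη]; positivity
  have h := (((gauss_int hη0 (1/d)).add ((gauss_int' hη0 (1/d)).const_mul ((1/d)/η))).const_mul
    (Real.exp (1/2)))
  refine h.congr (Filter.Eventually.of_forall fun t => ?_)
  simp only [Pi.add_apply]
  rw [key_identity d η t hd hη]

lemma oneD_bound (d : ℕ) (η : ℝ) (hd : 1 ≤ d) (hη : η = 1/(d:ℝ)^2) :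
    ∫ t in Set.Ioi (0:ℝ), (t/η) * Real.exp (-t^2/(2*η)) * Real.exp (d*t)
      ≤ 1 + Real.sqrt (2*Real.pi*Real.exp 1) := by
  have hd0 : (0:ℝ) < d := by exact_mod_cast hd
  have hη0 : 0 < η := by rw [hη]; positivity
  set c := (1:ℝ)/d with hc
  have h1 : ∫ t in Set.Ioi (0:ℝ), (t/η) * Real.exp (-t^2/(2*η)) * Real.exp (d*t)
      = Real.exp (1/2) * ((∫ t in Set.Ioi (0:ℝ), ((t - c)/η) * Real.exp (-(t - c)^2/(2*η)))
        + (c/η) * ∫ t in Set.Ioi (0:ℝ), Real.exp (-(t - c)^2/(2*η))) := by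
    rw [← integral_const_mul, ← integral_add
      ((gauss_int hη0 c).integrableOn) (((gauss_int' hη0 c).integrableOn).const_mul _),
      ← integral_const_mul]
    apply setIntegral_congr_fun measurableSet_Ioi
    intro t _
    dsimp only
    rw [key_identity d η t hd hη]
  rw [h1]
  have h2 : ∫ t in Set.Ioi (0:ℝ), ((t - c)/η) * Real.exp (-(t - c)^2/(2*η))
      = Real.exp (-(1/2 : ℝ)) := by
    rw [gauss_ftc hη0 c 0]
    congr 1
    rw [hc, hη]
    field_simp
    ring
  have h3 : ∫ t in Set.Ioi (0:ℝ), Real.exp (-(t - c)^2/(2*η)) ≤ Real.sqrt (2*Real.pi*η) := by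
    rw [← gauss_total hη0 c]
    apply setIntegral_le_integral (gauss_int' hη0 c)
    exact Filter.Eventually.of_forall fun t => (Real.exp_pos _).le
  have hcη : c/η = d := by rw [hc, hη]; field_simp
  have hsq : Real.sqrt (2*Real.pi*η) = Real.sqrt (2*Real.pi) / d := by
    rw [show 2*Real.pi*η = (Real.sqrt (2*Real.pi)/d)^2 by
      rw [hη, div_pow, Real.sq_sqrt (by positivity)]; ring]
    exact Real.sqrt_sq (by positivity)
  have hsqe : Real.sqrt (2*Real.pi*Real.exp 1) = Real.sqrt (2*Real.pi) * Real.exp (1/2 : ℝ) := by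
    rw [Real.sqrt_mul (by positivity), Real.exp_half]
  have e1 : Real.exp (1/2 : ℝ) * Real.exp (-(1/2:ℝ)) = 1 := by
    rw [← Real.exp_add]; norm_num
  rw [h2]
  have hle : Real.exp (1/2) * (Real.exp (-(1/2:ℝ))
      + (c/η) * ∫ t in Set.Ioi (0:ℝ), Real.exp (-(t - c)^2/(2*η)))
      ≤ Real.exp (1/2) * (Real.exp (-(1/2:ℝ)) + (c/η) * Real.sqrt (2*Real.pi*η)) := by
    gcongr
  refine hle.trans ?_
  rw [hcη, hsq, hsqe]
  rw [mul_add, e1, mul_div_cancel₀ _ (ne_of_gt hd0)]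
  ring_nf
  try exact le_rfl

lemma vol_thick {d : ℕ} (K : Set (EuclideanSpace ℝ (Fin d))) (hKne : K.Nonempty)
    (hKcl : IsClosed K) (hKconv : Convex ℝ K)
    (hK1 : closedBall (0 : EuclideanSpace ℝ (Fin d)) 1 ⊆ K)
    {t : ℝ} (ht : 0 ≤ t) :
    volume {y : EuclideanSpace ℝ (Fin d) | infDist y K ≤ t}
      ≤ ENNReal.ofReal (Real.exp (d * t)) * volume K := by
  have hsub : {y : EuclideanSpace ℝ (Fin d) | infDist y K ≤ t} ⊆ (1 + t) • K := by
    intro y hy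
    obtain ⟨x, hxK, hxd⟩ := hKcl.exists_infDist_eq_dist hKne y
    have hdist : dist y x ≤ t := by rw [← hxd]; exact hy
    rcases eq_or_lt_of_le ht with h0 | h0
    · have ht0 : t = 0 := h0.symm
      subst ht0
      have : y = x := by rwa [← dist_le_zero]
      rw [add_zero, one_smul]
      exact this ▸ hxK
    · have hadd := hKconv.add_smul (zero_le_one) ht
      rw [hadd, one_smul]
      refine ⟨x, hxK, y - x, ?_, by module⟩
      rw [Set.mem_smul_set_iff_inv_smul_mem₀ (ne_of_gt h0)]
      apply hK1
      simp only [mem_closedBall, dist_zero_right, norm_smul, norm_inv, Real.norm_eq_abs,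
        abs_of_pos h0]
      rw [inv_mul_le_iff₀ h0, mul_one]
      rw [← dist_eq_norm]
      exact hdist
  calc volume {y : EuclideanSpace ℝ (Fin d) | infDist y K ≤ t}
      ≤ volume ((1 + t) • K) := measure_mono hsub
    _ = ENNReal.ofReal |(1+t) ^ Module.finrank ℝ (EuclideanSpace ℝ (Fin d))| * volume K :=
        Measure.addHaar_smul volume _ _
    _ ≤ ENNReal.ofReal (Real.exp (d * t)) * volume K := by
        gcongr
        rw [finrank_euclideanSpace_fin, abs_of_nonneg (by positivity)]
        calc (1+t)^d ≤ (Real.exp t)^d :=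
              pow_le_pow_left₀ (by linarith) (by linarith [Real.add_one_le_exp t]) d
          _ = Real.exp (d * t) := by rw [← Real.exp_nat_mul]

lemma core_bound (d : ℕ) (hd : 1 ≤ d) (η : ℝ) (hη : η = 1/(d:ℝ)^2)
    (K : Set (EuclideanSpace ℝ (Fin d))) (hKne : K.Nonempty) (hKcl : IsClosed K)
    (hKconv : Convex ℝ K) (hK1 : closedBall (0 : EuclideanSpace ℝ (Fin d)) 1 ⊆ K) :
    ∫⁻ y, ENNReal.ofReal (Real.exp (-(infDist y K)^2/(2*η))) ∂volume
      ≤ volume K * ENNReal.ofReal (1 + Real.sqrt (2*Real.pi*Real.exp 1)) := by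
  have hd0 : (0:ℝ) < d := by exact_mod_cast hd
  have hη0 : 0 < η := by rw [hη]; positivity
  set F : ℝ → ENNReal := fun t => ENNReal.ofReal ((t/η) * Real.exp (-t^2/(2*η))) with hF
  have hFmeas : Measurable F := by
    apply Measurable.ennreal_ofReal
    exact (Continuous.mul (by continuity) (by continuity)).measurable
  set f : EuclideanSpace ℝ (Fin d) → ℝ → ENNReal :=
    fun y t => if infDist y K < t then F t else 0 with hf
  have hA : Continuous (fun y : EuclideanSpace ℝ (Fin d) => infDist y K) :=
    continuous_infDist_pt K
  -- Step 1 : pointwise identity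
  have step1 : ∀ y : EuclideanSpace ℝ (Fin d),
      ENNReal.ofReal (Real.exp (-(infDist y K)^2/(2*η)))
        = ∫⁻ t in Set.Ioi (0:ℝ), f y t := by
    intro y
    set A := infDist y K with hAdef
    have hA0 : 0 ≤ A := infDist_nonneg
    have e1 : ∀ t : ℝ, f y t = (Set.Ioi A).indicator F t := by
      intro t
      rw [Set.indicator_apply]
      simp [hf, Set.mem_Ioi, hAdef]
    calc ENNReal.ofReal (Real.exp (-A^2/(2*η)))
        = ENNReal.ofReal (∫ t in Set.Ioi A, (t/η) * Real.exp (-t^2/(2*η))) := by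
          congr 1
          have := gauss_ftc hη0 0 A
          simp only [sub_zero] at this
          rw [this]
      _ = ∫⁻ t in Set.Ioi A, F t := by
          apply ofReal_integral_eq_lintegral_ofReal
          · exact Integrable.integrableOn (by simpa using gauss_int hη0 0)
          · rw [Filter.EventuallyLE, ae_restrict_iff' measurableSet_Ioi]
            apply Filter.Eventually.of_forall
            intro t ht
            have h1 : 0 < t := lt_of_le_of_lt hA0 ht
            positivity
      _ = ∫⁻ t in Set.Ioi (0:ℝ), (Set.Ioi A).indicator F t := by
          rw [lintegral_indicator measurableSet_Ioi, Measure.restrict_restrict measurableSet_Ioi]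
          rw [Set.Ioi_inter_Ioi, max_eq_left hA0]
      _ = ∫⁻ t in Set.Ioi (0:ℝ), f y t := by
          apply lintegral_congr
          intro t
          rw [e1 t]
  -- Step 2 : Tonelli swap
  have hfmeas : Measurable (Function.uncurry f) := by
    have hs : MeasurableSet {p : EuclideanSpace ℝ (Fin d) × ℝ | infDist p.1 K < p.2} :=
      measurableSet_lt (hA.comp continuous_fst).measurable measurable_snd
    have : Function.uncurry f
        = {p : EuclideanSpace ℝ (Fin d) × ℝ | infDist p.1 K < p.2}.indicator
            (fun p => F p.2) := by
      funext p
      rw [Set.indicator_apply]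
      rfl
    rw [this]
    exact (hFmeas.comp measurable_snd).indicator hs
  have step2 : ∫⁻ y, ∫⁻ t in Set.Ioi (0:ℝ), f y t ∂volume
      = ∫⁻ t in Set.Ioi (0:ℝ), ∫⁻ y, f y t ∂volume := by
    exact lintegral_lintegral_swap hfmeas.aemeasurable
  -- Step 3 : inner bound
  have step3 : ∀ t ∈ Set.Ioi (0:ℝ), ∫⁻ y, f y t ∂volume
      ≤ volume K * (F t * ENNReal.ofReal (Real.exp (d*t))) := by
    intro t ht
    have hmeas : MeasurableSet {y : EuclideanSpace ℝ (Fin d) | infDist y K < t} :=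
      (isOpen_lt hA continuous_const).measurableSet
    have e2 : ∀ y, f y t = {y : EuclideanSpace ℝ (Fin d) | infDist y K < t}.indicator
        (fun _ => F t) y := by
      intro y
      rw [Set.indicator_apply]
      rfl
    calc ∫⁻ y, f y t ∂volume
        = F t * volume {y : EuclideanSpace ℝ (Fin d) | infDist y K < t} := by
          rw [lintegral_congr e2, lintegral_indicator hmeas]
          simp [mul_comm]
      _ ≤ F t * (ENNReal.ofReal (Real.exp (d*t)) * volume K) := by
          refine mul_le_mul_right ?_ (F t)
          have hsub2 : {y : EuclideanSpace ℝ (Fin d) | infDist y K < t}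
              ⊆ {y : EuclideanSpace ℝ (Fin d) | infDist y K ≤ t} := by
            intro y hy
            simp only [Set.mem_setOf_eq] at *
            exact le_of_lt hy
          exact le_trans (measure_mono hsub2) (vol_thick K hKne hKcl hKconv hK1 (le_of_lt ht))
      _ = volume K * (F t * ENNReal.ofReal (Real.exp (d*t))) := by ring
  -- Step 4 : outer integral
  have step4 : ∫⁻ t in Set.Ioi (0:ℝ), volume K * (F t * ENNReal.ofReal (Real.exp (d*t)))
      ≤ volume K * ENNReal.ofReal (1 + Real.sqrt (2*Real.pi*Real.exp 1)) := by
    have hFd : Measurable (fun t : ℝ => F t * ENNReal.ofReal (Real.exp (d*t))) :=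
      hFmeas.mul (Measurable.ennreal_ofReal
        ((Real.continuous_exp.comp (continuous_const.mul continuous_id)).measurable))
    rw [lintegral_const_mul _ hFd]
    gcongr
    have e3 : ∀ t ∈ Set.Ioi (0:ℝ), F t * ENNReal.ofReal (Real.exp (d*t))
        = ENNReal.ofReal ((t/η) * Real.exp (-t^2/(2*η)) * Real.exp (d*t)) := by
      intro t ht
      rw [hF, ← ENNReal.ofReal_mul]
      have h1 : (0:ℝ) < t := ht
      positivity
    rw [setLIntegral_congr_fun measurableSet_Ioi e3]
    rw [← ofReal_integral_eq_lintegral_ofReal ((oneD_integrable d η hd hη).integrableOn)]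
    · exact ENNReal.ofReal_le_ofReal (oneD_bound d η hd hη)
    · rw [Filter.EventuallyLE, ae_restrict_iff' measurableSet_Ioi]
      apply Filter.Eventually.of_forall
      intro t ht
      have h1 : (0:ℝ) < t := ht
      positivity
  calc ∫⁻ y, ENNReal.ofReal (Real.exp (-(infDist y K)^2/(2*η))) ∂volume
      = ∫⁻ t in Set.Ioi (0:ℝ), ∫⁻ y, f y t ∂volume := by
        rw [← step2]; exact lintegral_congr step1
    _ ≤ ∫⁻ t in Set.Ioi (0:ℝ), volume K * (F t * ENNReal.ofReal (Real.exp (d*t))) :=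
        setLIntegral_mono (measurable_const.mul (hFmeas.mul (Measurable.ennreal_ofReal
          ((Real.continuous_exp.comp (continuous_const.mul continuous_id)).measurable)))) step3
    _ ≤ _ := step4

theorem stmt_4 (d : ℕ) (hd : 1 ≤ d) (R M η : ℝ) (hR : 1 < R) (hM : 0 < M)
    (hη : η = 1 / (d : ℝ) ^ 2)
    (K : Set (EuclideanSpace ℝ (Fin d))) (hKne : K.Nonempty) (hKcl : IsClosed K)
    (hKconv : Convex ℝ K) (hK1 : closedBall (0 : EuclideanSpace ℝ (Fin d)) 1 ⊆ K)
    (hKR : K ⊆ closedBall (0 : EuclideanSpace ℝ (Fin d)) R)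
    (g : EuclideanSpace ℝ (Fin d) → ℝ)
    (hg : ∀ y, g y = (∫ x in K, Real.exp (-‖x - y‖ ^ 2 / (2 * η))) /
        ((volume K).toReal * (2 * Real.pi * η) ^ ((d : ℝ) / 2)))
    (πY : Measure (EuclideanSpace ℝ (Fin d)))
    (hπY : πY = volume.withDensity (fun y => ENNReal.ofReal (g y)))
    (μ : Measure (EuclideanSpace ℝ (Fin d)))
    (hμ : ∀ A : Set (EuclideanSpace ℝ (Fin d)), MeasurableSet A →
        μ A ≤ ENNReal.ofReal M * πY A)
    (n : EuclideanSpace ℝ (Fin d) → ℝ)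
    (hn : ∀ y, n y = (2 * Real.pi * η) ^ ((d : ℝ) / 2) *
        Real.exp (-(infDist y K) ^ 2 / (2 * η)) /
        ∫ x in K, Real.exp (-‖x - y‖ ^ 2 / (2 * η))) :
    ∫ y, n y ∂μ ≤ M * (Real.sqrt (2 * Real.pi * Real.exp 1) + 1) := by
  have hd0 : (0:ℝ) < d := by exact_mod_cast hd
  have hη0 : 0 < η := by rw [hη]; positivity
  have hS : 0 ≤ Real.sqrt (2 * Real.pi * Real.exp 1) := Real.sqrt_nonneg _
  have hRHS0 : 0 ≤ M * (Real.sqrt (2 * Real.pi * Real.exp 1) + 1) := by nlinarith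
  set P : ℝ := (2 * Real.pi * η) ^ ((d : ℝ) / 2) with hP
  have hP0 : 0 < P := Real.rpow_pos_of_pos (by positivity) _
  have hKcomp : IsCompact K :=
    Metric.isCompact_of_isClosed_isBounded hKcl (isBounded_closedBall.subset hKR)
  have hVpos : 0 < volume K :=
    lt_of_lt_of_le (measure_closedBall_pos volume (0:EuclideanSpace ℝ (Fin d)) one_pos)
      (measure_mono hK1)
  have hVfin : volume K < ⊤ := hKcomp.measure_lt_top
  set V : ℝ := (volume K).toReal with hV
  have hV0 : 0 < V := ENNReal.toReal_pos (ne_of_gt hVpos) (ne_of_lt hVfin)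
  set I : EuclideanSpace ℝ (Fin d) → ℝ :=
    fun y => ∫ x in K, Real.exp (-‖x - y‖ ^ 2 / (2 * η)) with hI
  have hIcont : ∀ y : EuclideanSpace ℝ (Fin d),
      Continuous (fun x : EuclideanSpace ℝ (Fin d) => Real.exp (-‖x - y‖ ^ 2 / (2 * η))) := by
    intro y
    exact Real.continuous_exp.comp
      (((((continuous_id.sub continuous_const).norm).pow 2).neg).div_const _)
  have hIint : ∀ y : EuclideanSpace ℝ (Fin d),
      IntegrableOn (fun x : EuclideanSpace ℝ (Fin d) =>
        Real.exp (-‖x - y‖ ^ 2 / (2 * η))) K volume :=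
    fun y => ((hIcont y).continuousOn).integrableOn_compact hKcomp
  have hIpos : ∀ y, 0 < I y := by
    intro y
    rw [hI]
    rw [setIntegral_pos_iff_support_of_nonneg_ae
      (Filter.Eventually.of_forall fun x => (Real.exp_pos _).le) (hIint y)]
    have hsupp : Function.support (fun x : EuclideanSpace ℝ (Fin d) =>
        Real.exp (-‖x - y‖ ^ 2 / (2 * η))) = Set.univ := by
      apply Set.eq_univ_of_forall
      intro x
      exact Real.exp_ne_zero _
    rw [hsupp, Set.univ_inter]
    exact hVpos
  
  have hEcont : Continuous (fun y : EuclideanSpace ℝ (Fin d) =>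
      Real.exp (-(infDist y K) ^ 2 / (2 * η))) :=
    Real.continuous_exp.comp ((((continuous_infDist_pt K).pow 2).neg).div_const _)
  have hIms : Measurable I := by
    have huc : Continuous (Function.uncurry (fun (y x : EuclideanSpace ℝ (Fin d)) =>
        Real.exp (-‖x - y‖ ^ 2 / (2 * η)))) := by
      apply Real.continuous_exp.comp
      apply Continuous.div_const
      apply Continuous.neg
      exact ((continuous_snd.sub continuous_fst).norm).pow 2
    exact (MeasureTheory.StronglyMeasurable.integral_prod_right
      huc.stronglyMeasurable).measurable
  have hnfun : n = fun y => P * Real.exp (-(infDist y K) ^ 2 / (2 * η)) / I y := by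
    funext y; rw [hn y]
  have hgfun : g = fun y => I y / (V * P) := by
    funext y; rw [hg y]
  have hn_nonneg : ∀ y, 0 ≤ n y := by
    intro y
    rw [hnfun]
    exact div_nonneg (by positivity) (hIpos y).le
  have hn_meas : Measurable n := by
    rw [hnfun]
    exact (measurable_const.mul hEcont.measurable).div hIms
  have hg_meas : Measurable g := by
    rw [hgfun]
    exact hIms.div measurable_const
  by_cases hnint : Integrable n μ
  swap
  · rw [integral_undef hnint]
    exact hRHS0
  rw [integral_eq_lintegral_of_nonneg_ae (Filter.Eventually.of_forall hn_nonneg)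
    hnint.aestronglyMeasurable]
  apply ENNReal.toReal_le_of_le_ofReal hRHS0
  have hμle : μ ≤ (ENNReal.ofReal M) • πY := by
    rw [Measure.le_iff]
    intro s hs
    simpa using hμ s hs
  have hgn : ∀ y, ENNReal.ofReal (g y) * ENNReal.ofReal (n y)
      = ENNReal.ofReal (Real.exp (-(infDist y K) ^ 2 / (2 * η))) / ENNReal.ofReal V := by
    intro y
    rw [← ENNReal.ofReal_mul (by rw [hgfun]; exact div_nonneg (hIpos y).le (by positivity)),
      ← ENNReal.ofReal_div_of_pos hV0]
    congr 1
    rw [hgfun, hnfun]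
    field_simp [hP0.ne', (hIpos y).ne']
  calc ∫⁻ y, ENNReal.ofReal (n y) ∂μ
      ≤ ∫⁻ y, ENNReal.ofReal (n y) ∂((ENNReal.ofReal M) • πY) :=
        lintegral_mono' hμle le_rfl
    _ = ENNReal.ofReal M * ∫⁻ y, ENNReal.ofReal (n y) ∂πY := lintegral_smul_measure _ _
    _ = ENNReal.ofReal M * ∫⁻ y, ENNReal.ofReal (g y) * ENNReal.ofReal (n y) ∂volume := by
        rw [hπY, lintegral_withDensity_eq_lintegral_mul volume
          (hg_meas.ennreal_ofReal) (hn_meas.ennreal_ofReal)]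
        rfl
    _ = ENNReal.ofReal M * ∫⁻ y, ENNReal.ofReal
          (Real.exp (-(infDist y K) ^ 2 / (2 * η))) / ENNReal.ofReal V ∂volume := by
        congr 1
        exact lintegral_congr hgn
    _ = ENNReal.ofReal M * ((∫⁻ y, ENNReal.ofReal
          (Real.exp (-(infDist y K) ^ 2 / (2 * η))) ∂volume) / ENNReal.ofReal V) := by
        congr 1
        simp_rw [div_eq_mul_inv]
        exact lintegral_mul_const' _ _ (by simpa using hV0)
    _ ≤ ENNReal.ofReal M * ((volume K * ENNReal.ofReal
          (1 + Real.sqrt (2 * Real.pi * Real.exp 1))) / ENNReal.ofReal V) := by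
        gcongr
        have := core_bound d hd η hη K hKne hKcl hKconv hK1
        convert this using 4 <;> ring
    _ = ENNReal.ofReal M * ENNReal.ofReal (1 + Real.sqrt (2 * Real.pi * Real.exp 1)) := by
        rw [hV, ENNReal.ofReal_toReal (ne_of_lt hVfin)]
        congr 1
        rw [mul_comm, mul_div_assoc, ENNReal.div_self (ne_of_gt hVpos) (ne_of_lt hVfin), mul_one]
    _ ≤ ENNReal.ofReal (M * (Real.sqrt (2 * Real.pi * Real.exp 1) + 1)) := by
        rw [← ENNReal.ofReal_mul hM.le]
        apply ENNReal.ofReal_le_ofReal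
        nlinarith
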